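/- If S spans L and T ⊆ L is σ-saturated on S, then T is a σ̄-generating set of L, where σ̄ = {1,…,n} ∖ σ. -/

import Mathlib

open scoped Classical

noncomputable section

variable {ι : Type*} [Fintype ι]

/-- `x ∈ ℕ^n`, i.e. all coordinates nonnegative. -/
def Nonneg (x : ι → ℤ) : Prop := ∀ i, 0 ≤ x i

/-- componentwise positive part `u⁺`. -/
def vposPart (x : ι → ℤ) : ι → ℤ := fun i => max (x i) 0

/-- componentwise negative part `u⁻`. -/
def vnegPart (x : ι → ℤ) : ι → ℤ := fun i => max (-x i) 0

/-- support of a vector. -/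
def suppV (x : ι → ℤ) : Set ι := {i | x i ≠ 0}

/-- membership in the fiber `F_{L,b} = {x ∈ ℕ^n : x ≡ b (mod L)}`. -/
def inFiber (L : AddSubgroup (ι → ℤ)) (b x : ι → ℤ) : Prop :=
  Nonneg x ∧ x - b ∈ L

/-- adjacency in the fiber graph: `x` and `y` differ by an element of `±S`. -/
def adjS (S : Set (ι → ℤ)) (x y : ι → ℤ) : Prop := x - y ∈ S ∨ y - x ∈ S

/-- `p 0, p 1, …, p k` is a path in the fiber graph `G(F_{L,b}, S)`. -/
def IsPathIn (L : AddSubgroup (ι → ℤ)) (S : Set (ι → ℤ)) (b : ι → ℤ)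
    (k : ℕ) (p : ℕ → ι → ℤ) : Prop :=
  (∀ i ≤ k, inFiber L b (p i)) ∧ ∀ i < k, adjS S (p i) (p (i+1))

/-- `x` and `y` are connected in the fiber graph `G(F_{L,b}, S)`. -/
def ConnIn (L : AddSubgroup (ι → ℤ)) (S : Set (ι → ℤ)) (b x y : ι → ℤ) : Prop :=
  ∃ k p, IsPathIn L S b k p ∧ p 0 = x ∧ p k = y

/-- `S` is a generating set of the lattice `L`: all fiber graphs are connected. -/
def IsGenSet (L : AddSubgroup (ι → ℤ)) (S : Set (ι → ℤ)) : Prop :=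
  ∀ b x y, inFiber L b x → inFiber L b y → ConnIn L S b x y

/-- `succ` (written `≻`) is a term ordering for `L`: an additive total
well-ordering on every fiber. -/
structure IsTermOrder (L : AddSubgroup (ι → ℤ))
    (succ : (ι → ℤ) → (ι → ℤ) → Prop) : Prop where
  trans : ∀ {x y z}, succ x y → succ y z → succ x z
  irrefl : ∀ x, ¬ succ x x
  total : ∀ b x y, inFiber L b x → inFiber L b y → x ≠ y → succ x y ∨ succ y x
  additive : ∀ x y γ, Nonneg γ → succ x y → succ (x + γ) (y + γ)
  wf : ∀ b, WellFounded (fun x y : ι → ℤ => inFiber L b x ∧ inFiber L b y ∧ succ y x)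

/-- `L_≻ = {u ∈ L : u⁺ ≻ u⁻}`. -/
def Lpos (L : AddSubgroup (ι → ℤ)) (succ : (ι → ℤ) → (ι → ℤ) → Prop) :
    Set (ι → ℤ) :=
  {u | u ∈ L ∧ succ (vposPart u) (vnegPart u)}

/-- `m` is the `≻`-minimal element of the fiber `F_{L,b}`. -/
def IsMinimalFiber (L : AddSubgroup (ι → ℤ)) (b : ι → ℤ)
    (succ : (ι → ℤ) → (ι → ℤ) → Prop) (m : ι → ℤ) : Prop :=
  inFiber L b m ∧ ∀ y, inFiber L b y → y ≠ m → succ y m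

/-- `G` is a `≻`-Gröbner basis of `L`: from every `x ∈ ℕ^n` there is a
`≻`-decreasing path in `G(F_{L,x},G)` to the `≻`-minimal element of `F_{L,x}`. -/
def IsGroebner (L : AddSubgroup (ι → ℤ)) (succ : (ι → ℤ) → (ι → ℤ) → Prop)
    (G : Set (ι → ℤ)) : Prop :=
  ∀ x, Nonneg x → ∃ m, IsMinimalFiber L x succ m ∧
    ∃ k p, IsPathIn L G x k p ∧ p 0 = x ∧ p k = m ∧ ∀ i < k, succ (p i) (p (i+1))

/-- there is a `≻`-reduction path from `x` to `y` in `G(F_{L,b},G)`: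
no intermediate node is `≻` than both endpoints. -/
def IsRedPath (L : AddSubgroup (ι → ℤ)) (G : Set (ι → ℤ)) (b : ι → ℤ)
    (succ : (ι → ℤ) → (ι → ℤ) → Prop) (x y : ι → ℤ) : Prop :=
  ∃ k p, IsPathIn L G b k p ∧ p 0 = x ∧ p k = y ∧
    ∀ i, 0 < i → i < k → ¬ (succ (p i) x ∧ succ (p i) y)

/-- `(x,z,y)` is a `≻`-critical path in `G(F_{L,b},G)`. -/
def IsCriticalIn (L : AddSubgroup (ι → ℤ)) (G : Set (ι → ℤ)) (b : ι → ℤ)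
    (succ : (ι → ℤ) → (ι → ℤ) → Prop) (x z y : ι → ℤ) : Prop :=
  inFiber L b x ∧ inFiber L b z ∧ inFiber L b y ∧
  adjS G x z ∧ adjS G z y ∧ succ z x ∧ succ z y

/-- `z^(u,v) := max{u⁺, v⁺}` componentwise. -/
def zOf (u v : ι → ℤ) : ι → ℤ := fun i => max (vposPart u i) (vposPart v i)

/-- `x^(u,v) := z^(u,v) − u`. -/
def xOf (u v : ι → ℤ) : ι → ℤ := zOf u v - u

/-- `y^(u,v) := z^(u,v) − v`. -/
def yOf (u v : ι → ℤ) : ι → ℤ := zOf u v - v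

/-- `(x,z,y)` is a `≻`-critical path for the pair `(u,v)`. -/
def IsCriticalFor (succ : (ι → ℤ) → (ι → ℤ) → Prop) (u v x z y : ι → ℤ) : Prop :=
  Nonneg x ∧ Nonneg z ∧ Nonneg y ∧ z - x = u ∧ z - y = v ∧ succ z x ∧ succ z y

/-- rational inner product `φ·x`. -/
def qdot (φ : ι → ℚ) (x : ι → ℤ) : ℚ := ∑ i, φ i * (x i : ℚ)

/-- there is a `φ`-reduction path from `x` to `y` in `G(F_{L,b},G)`. -/
def IsPhiRedPath (L : AddSubgroup (ι → ℤ)) (G : Set (ι → ℤ)) (b : ι → ℤ)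
    (φ : ι → ℚ) (x y : ι → ℤ) : Prop :=
  ∃ k p, IsPathIn L G b k p ∧ p 0 = x ∧ p k = y ∧
    ∀ i, 0 < i → i < k → ¬ (qdot φ x < qdot φ (p i) ∧ qdot φ y < qdot φ (p i))

/-- `G` is a `φ`-Gröbner basis of `L`. -/
def IsPhiGroebner (L : AddSubgroup (ι → ℤ)) (φ : ι → ℚ) (G : Set (ι → ℤ)) : Prop :=
  ∀ b x y, inFiber L b x → inFiber L b y → IsPhiRedPath L G b φ x y

/-- `x ∧_σ y`: componentwise min on `σ`, zero elsewhere. -/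
def meetOn (σ : Set ι) (x y : ι → ℤ) : ι → ℤ :=
  fun i => if i ∈ σ then min (x i) (y i) else 0

/-- `T` is `σ`-saturated on `S`. -/
def IsSaturatedOn (L : AddSubgroup (ι → ℤ)) (σ : Set ι) (S T : Set (ι → ℤ)) : Prop :=
  ∀ b x y, inFiber L b x → inFiber L b y → ConnIn L S b x y →
    ConnIn L T (b - meetOn σ x y) (x - meetOn σ x y) (y - meetOn σ x y)

/-- membership in `F^σ_{L,b}`: nonnegative outside `σ`. -/
def inFiberFree (L : AddSubgroup (ι → ℤ)) (σ : Set ι) (b x : ι → ℤ) : Prop :=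
  (∀ i, i ∉ σ → 0 ≤ x i) ∧ x - b ∈ L

/-- path in the graph `G(F^σ_{L,b}, S)`. -/
def IsPathFree (L : AddSubgroup (ι → ℤ)) (σ : Set ι) (S : Set (ι → ℤ)) (b : ι → ℤ)
    (k : ℕ) (p : ℕ → ι → ℤ) : Prop :=
  (∀ i ≤ k, inFiberFree L σ b (p i)) ∧ ∀ i < k, adjS S (p i) (p (i+1))

/-- connectivity in `G(F^σ_{L,b}, S)`. -/
def ConnFree (L : AddSubgroup (ι → ℤ)) (σ : Set ι) (S : Set (ι → ℤ))
    (b x y : ι → ℤ) : Prop :=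
  ∃ k p, IsPathFree L σ S b k p ∧ p 0 = x ∧ p k = y

/-- `S` is a `σ`-generating set of `L`. -/
def IsGenSetFree (L : AddSubgroup (ι → ℤ)) (σ : Set ι) (S : Set (ι → ℤ)) : Prop :=
  ∀ b x y, inFiberFree L σ b x → inFiberFree L σ b y → ConnFree L σ S b x y

/-- there is a `z`-bounded path from `x` to `y` in `G(F_{L,b},G)`:
all nodes are `≺ z`. -/
def IsBoundedPath (L : AddSubgroup (ι → ℤ)) (G : Set (ι → ℤ)) (b : ι → ℤ)
    (succ : (ι → ℤ) → (ι → ℤ) → Prop) (z x y : ι → ℤ) : Prop :=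
  ∃ k p, IsPathIn L G b k p ∧ p 0 = x ∧ p k = y ∧ ∀ i ≤ k, succ z (p i)

/-- `ē^i = −e^i` as a rational vector. -/
def ebar [DecidableEq ι] (i : ι) : ι → ℚ := fun j => if j = i then -1 else 0

/-- projection deleting the `i`-th coordinate. -/
def projCoord {n : ℕ} (i : Fin (n+1)) : (Fin (n+1) → ℤ) →+ (Fin n → ℤ) where
  toFun x := fun j => x (i.succAbove j)
  map_zero' := rfl
  map_add' _ _ := rfl

/-- projection onto the coordinates outside `σ`. -/
def projSet {n : ℕ} (σ : Finset (Fin n)) :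
    (Fin n → ℤ) →+ ({ i : Fin n // i ∉ σ } → ℤ) where
  toFun x := fun j => x j.1
  map_zero' := rfl
  map_add' _ _ := rfl

end

/-- `adjS` only depends on the difference. -/
lemma adjS_of_eq {ι : Type*} [Fintype ι] {S : Set (ι → ℤ)} {x y x' y' : ι → ℤ}
    (h : x' - y' = x - y) (hxy : adjS S x y) : adjS S x' y' := by
  rcases hxy with h1 | h1
  · left; rw [h]; exact h1
  · right
    have : y' - x' = y - x := by
      rw [← neg_sub x' y', h, neg_sub]
    rw [this]; exact h1

lemma adjS_symm {ι : Type*} [Fintype ι] {S : Set (ι → ℤ)} {x y : ι → ℤ}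
    (hxy : adjS S x y) : adjS S y x := hxy.symm

/-- Any element of the subgroup generated by `S` can be reached from `0`
by a walk with steps in `±S`, staying inside the closure. -/
lemma word_path {ι : Type*} [Fintype ι] (S : Set (ι → ℤ)) (d : ι → ℤ)
    (hd : d ∈ AddSubgroup.closure S) :
    ∃ (k : ℕ) (p : ℕ → ι → ℤ), p 0 = 0 ∧ p k = d ∧ (∀ i ≤ k, p i ∈ AddSubgroup.closure S) ∧
      ∀ i < k, adjS S (p i) (p (i+1)) := by
  induction hd using AddSubgroup.closure_induction with
  | mem s hs =>
      refine ⟨1, fun t => if t = 0 then 0 else s, by simp, by simp, ?_, ?_⟩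
      · rintro i hi
        interval_cases i
        · simpa using zero_mem _
        · simpa using AddSubgroup.subset_closure hs
      · intro i hi
        interval_cases i
        right
        simpa [adjS] using hs
  | zero => exact ⟨0, fun _ => 0, rfl, rfl, fun i _ => zero_mem _, fun i hi => by omega⟩
  | add a b ha hb iha ihb =>
      obtain ⟨k1, p1, h10, h1k, h1m, h1s⟩ := iha
      obtain ⟨k2, p2, h20, h2k, h2m, h2s⟩ := ihb
      refine ⟨k1 + k2, fun t => if t ≤ k1 then p1 t else p2 (t - k1) + a, ?_, ?_, ?_, ?_⟩
      · simp [h10]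
      · rcases Nat.eq_zero_or_pos k2 with h | h
        · subst h
          simp only [Nat.add_zero, le_refl, if_pos]
          rw [h1k, ← h2k, h20]
          abel
        · have : ¬ (k1 + k2 ≤ k1) := by omega
          simp only [this, if_neg, if_false]
          rw [Nat.add_sub_cancel_left, h2k]
          abel
      · intro i hi
        by_cases h : i ≤ k1
        · simpa [h] using h1m i h
        · simp only [h, if_false]
          rw [← h1k]
          exact add_mem (h2m _ (by omega)) (h1m k1 le_rfl)
      · intro i hi
        by_cases h : i + 1 ≤ k1
        · simp only [h, Nat.le_of_succ_le h, if_pos]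
          exact h1s i (by omega)
        · have hkey : ∀ j, k1 ≤ j → (if j ≤ k1 then p1 j else p2 (j - k1) + a)
              = p2 (j - k1) + a := by
            intro j hj
            by_cases hj' : j ≤ k1
            · have : j = k1 := le_antisymm hj' hj
              subst this
              simp [h20, h1k]
            · simp [hj']
          show adjS S (if i ≤ k1 then p1 i else p2 (i - k1) + a)
            (if i + 1 ≤ k1 then p1 (i+1) else p2 (i + 1 - k1) + a)
          rw [hkey i (by omega), hkey (i+1) (by omega)]
          have e1 : i + 1 - k1 = (i - k1) + 1 := by omega
          refine adjS_of_eq ?_ (h2s (i - k1) (by omega))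
          rw [e1]
          abel
  | neg a ha iha =>
      obtain ⟨k, p, h0, hk, hm, hs⟩ := iha
      refine ⟨k, fun t => p (k - t) - a, ?_, ?_, ?_, ?_⟩
      · simp [hk]
      · simp [h0]
      · intro i hi
        rw [← hk]
        exact sub_mem (hm _ (by omega)) (hm k le_rfl)
      · intro i hi
        have e1 : k - i = (k - (i+1)) + 1 := by omega
        show adjS S (p (k - i) - a) (p (k - (i+1)) - a)
        refine adjS_of_eq ?_ (adjS_symm (hs (k - (i+1)) (by omega)))
        rw [e1]
        abel

/-- if `S` spans `L` and `T ⊆ L` is `σ`-saturated on `S`,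
then `T` is a `σ̄`-generating set of `L`. -/
theorem stmt11 {n : ℕ} (L : AddSubgroup (Fin n → ℤ))
    (σ : Set (Fin n)) (S T : Set (Fin n → ℤ))
    (hS : ∀ s ∈ S, s ∈ L) (hT : ∀ s ∈ T, s ∈ L)
    (hspan : AddSubgroup.closure S = L)
    (hsat : IsSaturatedOn L σ S T) :
    IsGenSetFree L σᶜ T := by
  intro b x y hx hy
  obtain ⟨hxnn, hxL⟩ := hx
  obtain ⟨hynn, hyL⟩ := hy
  -- x, y nonneg on σ
  have hxσ : ∀ i ∈ σ, 0 ≤ x i := fun i hi => hxnn i (by simpa using hi)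
  have hyσ : ∀ i ∈ σ, 0 ≤ y i := fun i hi => hynn i (by simpa using hi)
  have hd : y - x ∈ AddSubgroup.closure S := by
    rw [hspan]
    have : y - x = (y - b) - (x - b) := by abel
    rw [this]
    exact sub_mem hyL hxL
  obtain ⟨k, p, hp0, hpk, hpm, hps⟩ := word_path S (y - x) hd
  set R : ℕ → Fin n → ℤ := fun t => x + p t with hR
  set v : Fin n → ℤ := fun i => ∑ t ∈ Finset.range (k+1), max (-(R t i)) 0 with hv
  have hvnn : ∀ i, 0 ≤ v i := by
    intro i
    exact Finset.sum_nonneg fun t _ => le_max_right _ _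
  have hvbig : ∀ t ≤ k, ∀ i, 0 ≤ R t i + v i := by
    intro t ht i
    have h1 : max (-(R t i)) 0 ≤ v i :=
      Finset.single_le_sum (fun s _ => le_max_right (-(R s i)) 0)
        (Finset.mem_range.mpr (by omega))
    have h2 : -(R t i) ≤ max (-(R t i)) 0 := le_max_left _ _
    linarith
  have hRL : ∀ t ≤ k, R t - b ∈ L := by
    intro t ht
    have : R t - b = (x - b) + p t := by show x + p t - b = (x - b) + p t; abel
    rw [this]
    exact add_mem hxL (hspan ▸ hpm t ht)
  have hfib : ∀ t ≤ k, inFiber L (b + v) (R t + v) := by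
    intro t ht
    refine ⟨fun i => by simpa using hvbig t ht i, ?_⟩
    have : R t + v - (b + v) = R t - b := by abel
    rw [this]
    exact hRL t ht
  have hconn : ConnIn L S (b + v) (x + v) (y + v) := by
    refine ⟨k, fun t => R t + v, ⟨fun i hi => hfib i hi, ?_⟩, ?_, ?_⟩
    · intro i hi
      show adjS S (x + p i + v) (x + p (i+1) + v)
      refine adjS_of_eq ?_ (hps i hi)
      abel
    · show x + p 0 + v = x + v
      rw [hp0]; abel
    · show x + p k + v = y + v
      rw [hpk]; abel
  have hxfib : inFiber L (b + v) (x + v) := by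
    have := hfib 0 (Nat.zero_le k)
    have e : R 0 + v = x + v := by
      show x + p 0 + v = x + v
      rw [hp0]; abel
    rwa [e] at this
  have hyfib : inFiber L (b + v) (y + v) := by
    have := hfib k le_rfl
    have e : R k + v = y + v := by
      show x + p k + v = y + v
      rw [hpk]; abel
    rwa [e] at this
  obtain ⟨m, q, ⟨hqf, hqs⟩, hq0, hqm⟩ := hsat (b + v) (x + v) (y + v) hxfib hyfib hconn
  set γ : Fin n → ℤ := meetOn σ (x + v) (y + v) with hγ
  have hγv : ∀ i ∈ σ, γ i - v i = min (x i) (y i) := by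
    intro i hi
    rw [hγ]
    simp only [meetOn, hi, if_pos, Pi.add_apply]
    rw [min_add_add_right]
    ring
  refine ⟨m, fun t => q t + (γ - v), ⟨?_, ?_⟩, ?_, ?_⟩
  · intro t ht
    obtain ⟨hqnn, hqL⟩ := hqf t ht
    constructor
    · intro i hi
      have hiσ : i ∈ σ := by simpa using hi
      have h1 : 0 ≤ q t i := hqnn i
      have h2 : γ i - v i = min (x i) (y i) := hγv i hiσ
      have h3 : 0 ≤ min (x i) (y i) := le_min (hxσ i hiσ) (hyσ i hiσ)
      simp only [Pi.add_apply, Pi.sub_apply]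
      linarith [h2 ▸ h3]
    · have : q t + (γ - v) - b = q t - (b + v - γ) := by abel
      rw [this]
      exact hqL
  · intro i hi
    show adjS T (q i + (γ - v)) (q (i+1) + (γ - v))
    refine adjS_of_eq ?_ (hqs i hi)
    abel
  · show q 0 + (γ - v) = x
    rw [hq0]; abel
  · show q m + (γ - v) = y
    rw [hqm]; abel
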